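/- Let p_data and p_t be everywhere-positive probability mass functions on a countable type, let ℓ(t) = log(1+exp(-t)), and let Y ∼ p_data and Y' ∼ p_t be independent. Then for any function f, E[ℓ(f(Y) − f(Y'))] ≥ log 2 − JSD(p₊‖p₋), where p₊(y,y') = p_data(y)·p_t(y') and p₋(y,y') = p_t(y)·p_data(y') are product distributions on pairs. Moreover, the lower bound is attained by f if and only if there is a constant Z such that f(y) = Z + log(p_data(y)/p_t(y)) for all y. -/

import Mathlib

open Real

lemma spin_gibbs {a b q : ℝ} (ha : 0 < a) (hb : 0 < b) (hq : 0 < q) (hq1 : q < 1) :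
    a * Real.log ((a+b)/a) + b * Real.log ((a+b)/b)
      ≤ -(a * Real.log q) - b * Real.log (1-q) := by
  have hab : 0 < a + b := by linarith
  have h1q : (0:ℝ) < 1 - q := by linarith
  have hx : 0 < q * (a+b) / a := by positivity
  have hy : 0 < (1-q) * (a+b) / b := by positivity
  have h1 := Real.log_le_sub_one_of_pos hx
  have h2 := Real.log_le_sub_one_of_pos hy
  have e1 : Real.log (q * (a+b) / a) = Real.log q + Real.log ((a+b)/a) := by
    rw [mul_div_assoc, Real.log_mul hq.ne' (by positivity)]
  have e2 : Real.log ((1-q) * (a+b) / b) = Real.log (1-q) + Real.log ((a+b)/b) := by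
    rw [mul_div_assoc, Real.log_mul h1q.ne' (by positivity)]
  have c1 : a * (q * (a+b) / a - 1) = q * (a+b) - a := by field_simp
  have c2 : b * ((1-q) * (a+b) / b - 1) = (1-q) * (a+b) - b := by field_simp
  nlinarith [mul_le_mul_of_nonneg_left h1 ha.le, mul_le_mul_of_nonneg_left h2 hb.le]

lemma spin_gibbs_strict {a b q : ℝ} (ha : 0 < a) (hb : 0 < b) (hq : 0 < q) (hq1 : q < 1)
    (hne : q ≠ a / (a+b)) :
    a * Real.log ((a+b)/a) + b * Real.log ((a+b)/b)
      < -(a * Real.log q) - b * Real.log (1-q) := by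
  have hab : 0 < a + b := by linarith
  have h1q : (0:ℝ) < 1 - q := by linarith
  have hx : 0 < q * (a+b) / a := by positivity
  have hy : 0 < (1-q) * (a+b) / b := by positivity
  have hxne : q * (a+b) / a ≠ 1 := by
    intro h
    apply hne
    field_simp at h ⊢
    linarith
  have h1 := Real.log_lt_sub_one_of_pos hx hxne
  have h2 := Real.log_le_sub_one_of_pos hy
  have e1 : Real.log (q * (a+b) / a) = Real.log q + Real.log ((a+b)/a) := by
    rw [mul_div_assoc, Real.log_mul hq.ne' (by positivity)]
  have e2 : Real.log ((1-q) * (a+b) / b) = Real.log (1-q) + Real.log ((a+b)/b) := by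
    rw [mul_div_assoc, Real.log_mul h1q.ne' (by positivity)]
  have c1 : a * (q * (a+b) / a - 1) = q * (a+b) - a := by field_simp
  have c2 : b * ((1-q) * (a+b) / b - 1) = (1-q) * (a+b) - b := by field_simp
  nlinarith [mul_lt_mul_of_pos_left h1 ha, mul_le_mul_of_nonneg_left h2 hb.le]

lemma spin_q_facts (t : ℝ) :
    Real.log ((1 + Real.exp (-t))⁻¹) = -Real.log (1 + Real.exp (-t)) ∧
    1 - (1 + Real.exp (-t))⁻¹ = (1 + Real.exp t)⁻¹ := by
  have h1 : (0:ℝ) < 1 + Real.exp (-t) := by positivity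
  have h2 : (0:ℝ) < 1 + Real.exp t := by positivity
  constructor
  · exact Real.log_inv _ ▸ rfl
  · rw [Real.exp_neg]
    have het : Real.exp t ≠ 0 := (Real.exp_pos t).ne'
    field_simp
    ring

/-- Pointwise logistic bound. -/
lemma spin_pointwise {a b : ℝ} (t : ℝ) (ha : 0 < a) (hb : 0 < b) :
    a * Real.log ((a+b)/a) + b * Real.log ((a+b)/b)
      ≤ a * Real.log (1 + Real.exp (-t)) + b * Real.log (1 + Real.exp t) := by
  have h1 : (0:ℝ) < 1 + Real.exp (-t) := by positivity
  have h2 : (0:ℝ) < 1 + Real.exp t := by positivity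
  obtain ⟨hl, hq2⟩ := spin_q_facts t
  have hq : 0 < (1 + Real.exp (-t))⁻¹ := by positivity
  have hq1 : (1 + Real.exp (-t))⁻¹ < 1 := by
    rw [inv_lt_one_iff₀]; right; linarith [Real.exp_pos (-t)]
  have := spin_gibbs ha hb hq hq1
  rw [hl, hq2, Real.log_inv] at this
  linarith

lemma spin_pointwise_strict {a b : ℝ} (t : ℝ) (ha : 0 < a) (hb : 0 < b)
    (hne : t ≠ Real.log (a/b)) :
    a * Real.log ((a+b)/a) + b * Real.log ((a+b)/b)
      < a * Real.log (1 + Real.exp (-t)) + b * Real.log (1 + Real.exp t) := by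
  have h1 : (0:ℝ) < 1 + Real.exp (-t) := by positivity
  have h2 : (0:ℝ) < 1 + Real.exp t := by positivity
  obtain ⟨hl, hq2⟩ := spin_q_facts t
  have hq : 0 < (1 + Real.exp (-t))⁻¹ := by positivity
  have hq1 : (1 + Real.exp (-t))⁻¹ < 1 := by
    rw [inv_lt_one_iff₀]; right; linarith [Real.exp_pos (-t)]
  have hab : 0 < a + b := by linarith
  have hqne : (1 + Real.exp (-t))⁻¹ ≠ a / (a+b) := by
    intro h
    apply hne
    have h' : 1 + Real.exp (-t) = (a+b)/a := by
      rw [inv_eq_iff_eq_inv] at h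
      rw [h, inv_div]
    have he : Real.exp (-t) = b / a := by
      have h'' : Real.exp (-t) = (a+b)/a - 1 := by linarith
      rw [h'']; field_simp; ring
    have : -t = Real.log (b/a) := by
      rw [← he, Real.log_exp]
    rw [Real.log_div hb.ne' ha.ne'] at this
    rw [Real.log_div ha.ne' hb.ne']
    linarith
  have := spin_gibbs_strict ha hb hq hq1 hqne
  rw [hl, hq2, Real.log_inv] at this
  linarith

lemma spin_pointwise_eq {a b : ℝ} (ha : 0 < a) (hb : 0 < b) :
    a * Real.log (1 + Real.exp (-(Real.log (a/b)))) + b * Real.log (1 + Real.exp (Real.log (a/b)))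
      = a * Real.log ((a+b)/a) + b * Real.log ((a+b)/b) := by
  have hd : (0:ℝ) < a / b := by positivity
  have h1 : -(Real.log (a/b)) = Real.log (b/a) := by
    rw [← Real.log_inv, inv_div]
  rw [h1, Real.exp_log hd, Real.exp_log (by positivity : (0:ℝ) < b / a)]
  have e1 : 1 + b / a = (a+b)/a := by field_simp
  have e2 : 1 + a / b = (a+b)/b := by field_simp; ring
  rw [e1, e2]

/-- Lemma B.2 of SPIN: for independent `Y ∼ p_data`, `Y' ∼ p_t`,
`E[ℓ(f(Y) − f(Y'))] ≥ log 2 − JSD(p₊‖p₋)` where `ℓ` is the logistic loss and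
`p₊(y,y') = p_data(y) p_t(y')`, `p₋(y,y') = p_t(y) p_data(y')`; the bound is
attained iff `f = Z + log(p_data/p_t)` for some constant `Z`. -/
theorem spin_logistic_lower_bound_JSD
    {α : Type*} [Countable α]
    (pdata pt : α → ℝ) (hpd : ∀ y, 0 < pdata y) (hpt : ∀ y, 0 < pt y)
    (hpd1 : ∑' y, pdata y = 1) (hpt1 : ∑' y, pt y = 1)
    (pp pm : α × α → ℝ)
    (hpp : pp = fun yy => pdata yy.1 * pt yy.2)
    (hpm : pm = fun yy => pt yy.1 * pdata yy.2)
    (JSD : ℝ)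
    (hJSD : JSD = (1/2) * (∑' yy : α × α, pp yy * Real.log (pp yy / ((pp yy + pm yy) / 2)))
                + (1/2) * (∑' yy : α × α, pm yy * Real.log (pm yy / ((pp yy + pm yy) / 2))))
    (hJ1 : Summable (fun yy : α × α => pp yy * Real.log (pp yy / ((pp yy + pm yy) / 2))))
    (hJ2 : Summable (fun yy : α × α => pm yy * Real.log (pm yy / ((pp yy + pm yy) / 2)))) :
    ∀ f : α → ℝ,
      Summable (fun yy : α × α =>
        pdata yy.1 * pt yy.2 * Real.log (1 + Real.exp (-(f yy.1 - f yy.2)))) →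
      ((∑' yy : α × α, pdata yy.1 * pt yy.2 * Real.log (1 + Real.exp (-(f yy.1 - f yy.2))))
          ≥ Real.log 2 - JSD) ∧
      ((∑' yy : α × α, pdata yy.1 * pt yy.2 * Real.log (1 + Real.exp (-(f yy.1 - f yy.2))))
          = Real.log 2 - JSD
        ↔ ∃ Z : ℝ, ∀ y, f y = Z + Real.log (pdata y / pt y)) := by
  intro f hS
  -- basic positivity
  have hppos : ∀ yy : α × α, 0 < pp yy := fun yy => by
    rw [hpp]; exact mul_pos (hpd _) (hpt _)
  have hpmpos : ∀ yy : α × α, 0 < pm yy := fun yy => by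
    rw [hpm]; exact mul_pos (hpt _) (hpd _)
  -- summability of marginals
  have hsd : Summable pdata := by
    by_contra h; rw [tsum_eq_zero_of_not_summable h] at hpd1; norm_num at hpd1
  have hst : Summable pt := by
    by_contra h; rw [tsum_eq_zero_of_not_summable h] at hpt1; norm_num at hpt1
  have hppS : Summable pp := by
    rw [hpp]; exact hsd.mul_of_nonneg hst (fun y => (hpd y).le) (fun y => (hpt y).le)
  have hpmS : Summable pm := by
    rw [hpm]; exact hst.mul_of_nonneg hsd (fun y => (hpt y).le) (fun y => (hpd y).le)
  have hnd : Summable fun y => ‖pdata y‖ := hsd.congr fun y => by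
    rw [Real.norm_eq_abs, abs_of_pos (hpd y)]
  have hnt : Summable fun y => ‖pt y‖ := hst.congr fun y => by
    rw [Real.norm_eq_abs, abs_of_pos (hpt y)]
  have hppt : ∑' yy, pp yy = 1 := by
    rw [hpp, ← tsum_mul_tsum_of_summable_norm hnd hnt, hpd1, hpt1]; norm_num
  have hpmt : ∑' yy, pm yy = 1 := by
    rw [hpm, ← tsum_mul_tsum_of_summable_norm hnt hnd, hpd1, hpt1]; norm_num
  -- the loss functions
  set L : α × α → ℝ := fun yy => pp yy * Real.log (1 + Real.exp (-(f yy.1 - f yy.2))) with hL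
  set L' : α × α → ℝ := fun yy => pm yy * Real.log (1 + Real.exp (f yy.1 - f yy.2)) with hL'
  have hEeq : (∑' yy : α × α, pdata yy.1 * pt yy.2 * Real.log (1 + Real.exp (-(f yy.1 - f yy.2))))
      = ∑' yy, L yy := tsum_congr fun yy => by rw [hL, hpp]
  have hSL : Summable L := by
    refine hS.congr fun yy => ?_
    rw [hL, hpp]
  have hswap : ∀ yy : α × α, L' yy = L ((Equiv.prodComm α α) yy) := by
    rintro ⟨y1, y2⟩
    simp only [hL, hL', hpp, hpm, Equiv.prodComm_apply, Prod.swap_prod_mk, neg_sub]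
    ring
  have hSL' : Summable L' := by
    refine ((Equiv.prodComm α α).summable_iff.2 hSL).congr fun yy => ?_
    rw [hswap yy]; rfl
  have htL' : ∑' yy, L' yy = ∑' yy, L yy := by
    rw [tsum_congr hswap, (Equiv.prodComm α α).tsum_eq L]
  -- the lower envelope
  set M : α × α → ℝ := fun yy =>
    pp yy * Real.log ((pp yy + pm yy) / pp yy) + pm yy * Real.log ((pp yy + pm yy) / pm yy)
    with hM
  have hpt_le : ∀ yy, M yy ≤ L yy + L' yy := fun yy =>
    spin_pointwise (f yy.1 - f yy.2) (hppos yy) (hpmpos yy)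
  have key : ∀ yy, M yy =
      (pp yy * Real.log 2 - pp yy * Real.log (pp yy / ((pp yy + pm yy) / 2)))
      + (pm yy * Real.log 2 - pm yy * Real.log (pm yy / ((pp yy + pm yy) / 2))) := by
    intro yy
    have h1 := hppos yy; have h2 := hpmpos yy
    have hs : (0:ℝ) < pp yy + pm yy := by linarith
    simp only [hM]
    rw [Real.log_div hs.ne' h1.ne', Real.log_div hs.ne' h2.ne',
      Real.log_div h1.ne' (by positivity : ((pp yy + pm yy) / 2 : ℝ) ≠ 0),
      Real.log_div h2.ne' (by positivity : ((pp yy + pm yy) / 2 : ℝ) ≠ 0),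
      Real.log_div hs.ne' (two_ne_zero)]
    ring
  have hMs : Summable M := by
    refine (((hppS.mul_right (Real.log 2)).sub hJ1).add
      ((hpmS.mul_right (Real.log 2)).sub hJ2)).congr fun yy => (key yy).symm
  have hMt : ∑' yy, M yy = 2 * Real.log 2 - 2 * JSD := by
    rw [tsum_congr key,
      Summable.tsum_add ((hppS.mul_right (Real.log 2)).sub hJ1) ((hpmS.mul_right (Real.log 2)).sub hJ2),
      Summable.tsum_sub (hppS.mul_right (Real.log 2)) hJ1, Summable.tsum_sub (hpmS.mul_right (Real.log 2)) hJ2,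
      tsum_mul_right, tsum_mul_right, hppt, hpmt, hJSD]
    ring
  have hsumLL : Summable (fun yy => L yy + L' yy) := hSL.add hSL'
  have h2E : ∑' yy, (L yy + L' yy) = 2 * ∑' yy, L yy := by
    rw [Summable.tsum_add hSL hSL', htL']; ring
  have hmain : ∑' yy, M yy ≤ ∑' yy, (L yy + L' yy) := Summable.tsum_le_tsum hpt_le hMs hsumLL
  -- the ratio function
  have hratio : ∀ yy : α × α, Real.log (pp yy / pm yy)
      = Real.log (pdata yy.1 / pt yy.1) - Real.log (pdata yy.2 / pt yy.2) := by
    rintro ⟨y1, y2⟩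
    have e : pp (y1, y2) / pm (y1, y2) = (pdata y1 / pt y1) / (pdata y2 / pt y2) := by
      simp only [hpp, hpm]
      field_simp
    rw [e, Real.log_div (div_pos (hpd y1) (hpt y1)).ne' (div_pos (hpd y2) (hpt y2)).ne']
  have hnα : Nonempty α := by
    by_contra h
    rw [not_nonempty_iff] at h
    rw [tsum_empty] at hpd1
    norm_num at hpd1
  constructor
  · rw [ge_iff_le, hEeq]; linarith [hmain, h2E, hMt]
  · rw [hEeq]
    constructor
    · intro hEq
      have heqsum : ∑' yy, (L yy + L' yy) = ∑' yy, M yy := by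
        rw [h2E, hMt, hEq]; ring
      have hpteq : ∀ yy, M yy = L yy + L' yy := by
        by_contra h
        push_neg at h
        obtain ⟨yy, hyy⟩ := h
        have hlt : M yy < L yy + L' yy := lt_of_le_of_ne (hpt_le yy) hyy
        have := Summable.tsum_lt_tsum hpt_le hlt hMs hsumLL
        linarith [heqsum, this]
      have hteq : ∀ yy : α × α, f yy.1 - f yy.2 = Real.log (pp yy / pm yy) := by
        intro yy
        by_contra ht
        have := spin_pointwise_strict (f yy.1 - f yy.2) (hppos yy) (hpmpos yy) ht
        have h' := hpteq yy
        simp only [hM, hL, hL'] at h'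
        linarith
      obtain ⟨y0⟩ := hnα
      refine ⟨f y0 - Real.log (pdata y0 / pt y0), fun y => ?_⟩
      have := hteq (y, y0)
      rw [hratio (y, y0)] at this
      simp only at this
      linarith
    · rintro ⟨Z, hZ⟩
      have hpteq : ∀ yy, L yy + L' yy = M yy := by
        intro yy
        have ht : f yy.1 - f yy.2 = Real.log (pp yy / pm yy) := by
          rw [hZ yy.1, hZ yy.2, hratio yy]; ring
        simp only [hL, hL', hM]
        rw [ht]
        exact spin_pointwise_eq (hppos yy) (hpmpos yy)
      have : ∑' yy, (L yy + L' yy) = ∑' yy, M yy := tsum_congr hpteq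
      rw [h2E, hMt] at this
      linarith
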